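/- For all 1 ≤ i, j ≤ n with i ≠ j, all signs a, b ∈ {+1,−1}, and every nonzero t ∈ F, one has g_{ai,bj}(t) = I + at·E_{ai,−bj} − at·E_{bj,−ai} + at⁻¹·E_{−ai,bj} − at⁻¹·E_{−bj,ai} − E_{ai,ai} − E_{bj,bj} − E_{−bj,−bj} − E_{−ai,−ai}. -/

import Mathlib

open Matrix

/-- Index set `{-n, …, n}` for (2n+1)×(2n+1) matrices. -/
abbrev BIdx (n : ℕ) : Type := {z : ℤ // z ∈ Finset.Icc (-(n : ℤ)) (n : ℤ)}

/-- `Eb F n p q` : the matrix with a 1 in entry (p,q) and 0 elsewhere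
(rows and columns indexed by `{-n, …, n}`). -/
def Eb (F : Type*) [Field F] (n : ℕ) (p q : ℤ) : Matrix (BIdx n) (BIdx n) F :=
  Matrix.of fun r c => if ((r : ℤ) = p ∧ (c : ℤ) = q) then 1 else 0

/-- Short-root matrix `S^a_i(t) := I + 2at·E_{ai,0} − at·E_{0,−ai} − t²·E_{ai,−ai}`. -/
def Sb (F : Type*) [Field F] (n : ℕ) (a i : ℤ) (t : F) : Matrix (BIdx n) (BIdx n) F :=
  1 + (2 * (a : F) * t) • Eb F n (a * i) 0 - ((a : F) * t) • Eb F n 0 (-(a * i))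
    - t ^ 2 • Eb F n (a * i) (-(a * i))

/-- Long-root matrix `L^{a,b}_{i,j}(t) := I + at·E_{ai,−bj} − at·E_{bj,−ai}`. -/
def Lb (F : Type*) [Field F] (n : ℕ) (a b i j : ℤ) (t : F) : Matrix (BIdx n) (BIdx n) F :=
  1 + ((a : F) * t) • Eb F n (a * i) (-(b * j)) - ((a : F) * t) • Eb F n (b * j) (-(a * i))


lemma Eb_mul_ne (F : Type*) [Field F] (n : ℕ) (p q r s : ℤ) (h : q ≠ r) :
    Eb F n p q * Eb F n r s = 0 := by
  ext x y
  simp only [Eb, Matrix.mul_apply, Matrix.of_apply, Matrix.zero_apply]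
  apply Finset.sum_eq_zero
  intro k _
  split_ifs with h1 h2 <;> simp_all

lemma Eb_mul_eq (F : Type*) [Field F] (n : ℕ) (p q s : ℤ)
    (h : q ∈ Finset.Icc (-(n:ℤ)) (n:ℤ)) :
    Eb F n p q * Eb F n q s = Eb F n p s := by
  ext x y
  simp only [Eb, Matrix.mul_apply, Matrix.of_apply]
  rw [Finset.sum_eq_single (⟨q, h⟩ : BIdx n)]
  · split_ifs with h1 h2 h3 <;> simp_all
  · intro k _ hk
    have hne : ¬((x:ℤ) = p ∧ (k:ℤ) = q) := fun hpq => hk (Subtype.ext hpq.2)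
    rw [if_neg hne, zero_mul]
  · simp

/-- `g_{ai,bj}(t) := L^{a,b}_{i,j}(t) · L^{−a,−b}_{i,j}(−t⁻¹) · L^{a,b}_{i,j}(t)`. -/
noncomputable def gB (F : Type*) [Field F] (n : ℕ) (a b i j : ℤ) (t : F) : Matrix (BIdx n) (BIdx n) F :=
  Lb F n a b i j t * Lb F n (-a) (-b) i j (-t⁻¹) * Lb F n a b i j t

/-- For `i ≠ j` and nonzero `t`,
`g_{ai,bj}(t) = I + at·E_{ai,−bj} − at·E_{bj,−ai} + at⁻¹·E_{−ai,bj} − at⁻¹·E_{−bj,ai}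
  − E_{ai,ai} − E_{bj,bj} − E_{−bj,−bj} − E_{−ai,−ai}`. -/
theorem typeB_g_formula (F : Type*) [Field F] (n : ℕ) (hn : 1 ≤ n)
    (a b : ℤ) (ha : a = 1 ∨ a = -1) (hb : b = 1 ∨ b = -1)
    (i j : ℤ) (hi1 : 1 ≤ i) (hin : i ≤ (n : ℤ)) (hj1 : 1 ≤ j) (hjn : j ≤ (n : ℤ))
    (hij : i ≠ j) (t : F) (ht : t ≠ 0) :
    gB F n a b i j t
      = 1 + ((a : F) * t) • Eb F n (a * i) (-(b * j))
          - ((a : F) * t) • Eb F n (b * j) (-(a * i))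
          + ((a : F) * t⁻¹) • Eb F n (-(a * i)) (b * j)
          - ((a : F) * t⁻¹) • Eb F n (-(b * j)) (a * i)
          - Eb F n (a * i) (a * i) - Eb F n (b * j) (b * j)
          - Eb F n (-(b * j)) (-(b * j)) - Eb F n (-(a * i)) (-(a * i)) := by
  have hP : a * i ∈ Finset.Icc (-(n:ℤ)) (n:ℤ) := by
    rcases ha with rfl | rfl <;> simp <;> omega
  have hQ : b * j ∈ Finset.Icc (-(n:ℤ)) (n:ℤ) := by
    rcases hb with rfl | rfl <;> simp <;> omega
  have hmP : -(a * i) ∈ Finset.Icc (-(n:ℤ)) (n:ℤ) := by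
    rcases ha with rfl | rfl <;> simp <;> omega
  have hmQ : -(b * j) ∈ Finset.Icc (-(n:ℤ)) (n:ℤ) := by
    rcases hb with rfl | rfl <;> simp <;> omega
  have e1 : -(b*j) ≠ a*i := by rcases ha with rfl|rfl <;> rcases hb with rfl|rfl <;> omega
  have e2 : -(b*j) ≠ b*j := by rcases hb with rfl|rfl <;> omega
  have e3 : -(b*j) ≠ -(a*i) := by rcases ha with rfl|rfl <;> rcases hb with rfl|rfl <;> omega
  have e4 : -(a*i) ≠ a*i := by rcases ha with rfl|rfl <;> omega
  have e5 : -(a*i) ≠ b*j := by rcases ha with rfl|rfl <;> rcases hb with rfl|rfl <;> omega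
  have e6 : -(a*i) ≠ -(b*j) := by rcases ha with rfl|rfl <;> rcases hb with rfl|rfl <;> omega
  have e7 : b*j ≠ a*i := by rcases ha with rfl|rfl <;> rcases hb with rfl|rfl <;> omega
  have e8 : a*i ≠ b*j := by rcases ha with rfl|rfl <;> rcases hb with rfl|rfl <;> omega
  set A := Eb F n (a*i) (-(b*j)) with hA
  set B := Eb F n (b*j) (-(a*i)) with hB
  set C := Eb F n (-(a*i)) (b*j) with hC
  set D := Eb F n (-(b*j)) (a*i) with hD
  have hAA : A * A = 0 := Eb_mul_ne F n _ _ _ _ e1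
  have hAB : A * B = 0 := Eb_mul_ne F n _ _ _ _ e2
  have hAC : A * C = 0 := Eb_mul_ne F n _ _ _ _ e3
  have hAD : A * D = Eb F n (a*i) (a*i) := Eb_mul_eq F n _ _ _ hmQ
  have hBA : B * A = 0 := Eb_mul_ne F n _ _ _ _ e4
  have hBB : B * B = 0 := Eb_mul_ne F n _ _ _ _ e5
  have hBC : B * C = Eb F n (b*j) (b*j) := Eb_mul_eq F n _ _ _ hmP
  have hBD : B * D = 0 := Eb_mul_ne F n _ _ _ _ e6
  have hCA : C * A = 0 := Eb_mul_ne F n _ _ _ _ e7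
  have hCB : C * B = Eb F n (-(a*i)) (-(a*i)) := Eb_mul_eq F n _ _ _ hQ
  have hDA : D * A = Eb F n (-(b*j)) (-(b*j)) := Eb_mul_eq F n _ _ _ hP
  have hDB : D * B = 0 := Eb_mul_ne F n _ _ _ _ e8
  have hAnP : A * Eb F n (-(a*i)) (-(a*i)) = 0 := Eb_mul_ne F n _ _ _ _ e3
  have hAnQ : A * Eb F n (-(b*j)) (-(b*j)) = A := Eb_mul_eq F n _ _ _ hmQ
  have hBnP : B * Eb F n (-(a*i)) (-(a*i)) = B := Eb_mul_eq F n _ _ _ hmP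
  have hBnQ : B * Eb F n (-(b*j)) (-(b*j)) = 0 := Eb_mul_ne F n _ _ _ _ e6
  have hPA : Eb F n (a*i) (a*i) * A = A := Eb_mul_eq F n _ _ _ hP
  have hPB : Eb F n (a*i) (a*i) * B = 0 := Eb_mul_ne F n _ _ _ _ e8
  have hQA : Eb F n (b*j) (b*j) * A = 0 := Eb_mul_ne F n _ _ _ _ e7
  have hQB : Eb F n (b*j) (b*j) * B = B := Eb_mul_eq F n _ _ _ hQ
  have ha2 : (a:F) * (a:F) = 1 := by rcases ha with rfl|rfl <;> norm_num
  have hL2 : Lb F n (-a) (-b) i j (-t⁻¹)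
      = 1 + ((a:F) * t⁻¹) • C - ((a:F) * t⁻¹) • D := by
    rw [hC, hD]
    unfold Lb
    push_cast
    rw [neg_mul a i, neg_mul b j, neg_neg, neg_neg]
    congr 2 <;> ring_nf
  rw [gB, hL2]
  simp only [Lb, ← hA, ← hB]
  simp only [mul_add, add_mul, mul_sub, sub_mul, one_mul, mul_one, smul_mul_assoc,
    mul_smul_comm, mul_assoc, hAA, hAB, hAC, hAD, hBA, hBB, hBC, hBD, hCA, hCB, hDA, hDB,
    hAnP, hAnQ, hBnP, hBnQ, hPA, hPB, hQA, hQB, smul_zero, mul_zero, zero_mul, add_zero, sub_zero, zero_sub,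
    zero_add, smul_smul]
  match_scalars <;> field_simp <;>
    first
      | linear_combination t * ha2
      | linear_combination (-(a:F) * t ^ 2) * ha2
      | (rcases ha with h | h <;> rw [h] <;> push_cast <;> ring)
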